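/- Consider a hypergraph H = (V,E) with open intervals in which no vertex is known mandatory by the leftmost-containment rule (no hyperedge has a leftmost vertex whose interval contains another vertex's interval of that hyperedge, and leftmost vertices are unique). Define the vertex cover instance Ḡ = (V, Ē) where {v,u} ∈ Ē iff some unsolved hyperedge F contains both, v is leftmost in F, and I_v ∩ I_u ≠ ∅. Then any vertex cover Q of Ḡ, once queried, followed by exhaustively querying vertices that become known mandatory by the leftmost-containment rule, yields a feasible query set: the orientation of every hyperedge becomes determined. -/
import Mathlib


open Finset

/-- Lower endpoint of vertex `v`'s interval after querying the set `Q`. -/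
def qlo {V : Type*} [DecidableEq V] (L w : V → ℝ) (Q : Finset V) (v : V) : ℝ :=
  if v ∈ Q then w v else L v

/-- Upper endpoint of vertex `v`'s interval after querying the set `Q`. -/
def qhi {V : Type*} [DecidableEq V] (U w : V → ℝ) (Q : Finset V) (v : V) : ℝ :=
  if v ∈ Q then w v else U v

/-- The query set `Q` suffices to orient the hyperedge `S`: some vertex of `S`
has its (updated) interval weakly below all other (updated) intervals of `S`. -/
def Solves {V : Type*} [DecidableEq V] (L U w : V → ℝ) (Q : Finset V) (S : Finset V) : Prop :=
  ∃ m ∈ S, ∀ u ∈ S, u ≠ m → qhi U w Q m ≤ qlo L w Q u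

theorem stmt18 {V : Type*} [Fintype V] [DecidableEq V] (L U w : V → ℝ)
    (hw : ∀ x : V, w x ∈ Set.Ioo (L x) (U x))
    (E : Finset (Finset V))
    (hnomand : ∀ F ∈ E, ¬ Solves L U w ∅ F → ∃ v ∈ F,
      (∀ x ∈ F, x ≠ v → L v < L x) ∧
      ∀ u ∈ F, u ≠ v → ¬ (Set.Ioo (L u) (U u) ⊆ Set.Ioo (L v) (U v)))
    (Q : Finset V)
    (hVC : ∀ v u : V, (∃ F ∈ E, ¬ Solves L U w ∅ F ∧ v ∈ F ∧ u ∈ F ∧ v ≠ u ∧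
        (∀ x ∈ F, L v ≤ L x) ∧
        (Set.Ioo (L v) (U v) ∩ Set.Ioo (L u) (U u)).Nonempty) → v ∈ Q ∨ u ∈ Q) :
    ∃ M : Finset V,
      (∀ v ∈ M, ∀ Q' : Finset V, (∀ S ∈ E, Solves L U w Q' S) → v ∈ Q') ∧
      ∀ S ∈ E, Solves L U w (Q ∪ M) S := by
  classical
  have hlw : ∀ x, L x < w x := fun x => (hw x).1
  have hwU : ∀ x, w x < U x := fun x => (hw x).2
  -- basic endpoint facts
  have hqlo_le : ∀ (Q' : Finset V) (x : V), qlo L w Q' x ≤ w x := by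
    intro Q' x; unfold qlo; split_ifs with h
    · exact le_rfl
    · exact (hlw x).le
  have hle_qlo : ∀ (Q' : Finset V) (x : V), L x ≤ qlo L w Q' x := by
    intro Q' x; unfold qlo; split_ifs with h
    · exact (hlw x).le
    · exact le_rfl
  have hw_le_qhi : ∀ (Q' : Finset V) (x : V), w x ≤ qhi U w Q' x := by
    intro Q' x; unfold qhi; split_ifs with h
    · exact le_rfl
    · exact (hwU x).le
  have hqhi_le : ∀ (Q' : Finset V) (x : V), qhi U w Q' x ≤ U x := by
    intro Q' x; unfold qhi; split_ifs with h
    · exact (hwU x).le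
    · exact le_rfl
  have hqhi_mem : ∀ (Q' : Finset V) (x : V), x ∈ Q' → qhi U w Q' x = w x := by
    intro Q' x h; unfold qhi; simp [h]
  have hqhi_not : ∀ (Q' : Finset V) (x : V), x ∉ Q' → qhi U w Q' x = U x := by
    intro Q' x h; unfold qhi; simp [h]
  have hqlo_mem : ∀ (Q' : Finset V) (x : V), x ∈ Q' → qlo L w Q' x = w x := by
    intro Q' x h; unfold qlo; simp [h]
  have hqlo_not : ∀ (Q' : Finset V) (x : V), x ∉ Q' → qlo L w Q' x = L x := by
    intro Q' x h; unfold qlo; simp [h]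
  set M : Finset V := Finset.univ.filter
    (fun v => ∀ Q' : Finset V, (∀ S ∈ E, Solves L U w Q' S) → v ∈ Q') with hMdef
  have hMmem : ∀ v : V, v ∈ M ↔
      ∀ Q' : Finset V, (∀ S ∈ E, Solves L U w Q' S) → v ∈ Q' := by
    intro v; simp [hMdef]
  refine ⟨M, fun v hv => (hMmem v).mp hv, ?_⟩
  intro F hF
  set R := Q ∪ M with hR
  have hMR : M ⊆ R := Finset.subset_union_right
  by_cases hsolved : Solves L U w ∅ F
  · obtain ⟨m, hmF, hm⟩ := hsolved
    refine ⟨m, hmF, fun u hu hum => ?_⟩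
    have h1 : qhi U w R m ≤ U m := hqhi_le R m
    have h2 : U m ≤ L u := by
      have := hm u hu hum
      rwa [hqhi_not ∅ m (Finset.notMem_empty m),
        hqlo_not ∅ u (Finset.notMem_empty u)] at this
    exact le_trans (le_trans h1 h2) (hle_qlo R u)
  · obtain ⟨v, hvF, hvL, hvNC⟩ := hnomand F hF hsolved
    have hUv : ∀ u ∈ F, u ≠ v → U v < U u := by
      intro u huF huv
      by_contra h
      push_neg at h
      exact hvNC u huF huv (Set.Ioo_subset_Ioo (hvL u huF huv).le h)
    -- key extraction: from a feasible Q' missing y ∈ F \ {v}, get a global minimizer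
    have extract : ∀ (Q' : Finset V), (∀ S ∈ E, Solves L U w Q' S) →
        ∀ y ∈ F, y ≠ v → y ∉ Q' →
        ∃ m' ∈ F, m' ≠ y ∧ w m' ≤ L y ∧ ∀ z ∈ F, z ≠ m' → w m' ≤ w z := by
      intro Q' hQ' y hyF hyv hyQ'
      obtain ⟨m', hm'F, hm'⟩ := hQ' F hF
      have hm'y : m' ≠ y := by
        intro h
        subst h
        have h1 := hm' v hvF (Ne.symm hyv)
        rw [hqhi_not Q' m' hyQ'] at h1
        have : U m' ≤ w v := le_trans h1 (hqlo_le Q' v)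
        exact absurd (lt_trans (hwU v) (hUv m' hm'F hyv)) (not_lt.mpr this)
      refine ⟨m', hm'F, hm'y, ?_, ?_⟩
      · have h1 := hm' y hyF (Ne.symm hm'y)
        rw [hqlo_not Q' y hyQ'] at h1
        exact le_trans (hw_le_qhi Q' m') h1
      · intro z hzF hzm'
        exact le_trans (hw_le_qhi Q' m') (le_trans (hm' z hzF hzm') (hqlo_le Q' z))
    by_cases hvR : v ∈ R
    · -- leftmost vertex is queried (in Q or mandatory)
      by_cases hsubA : ∀ u ∈ F, u ≠ v → L u < w v → u ∈ R
      · -- all "interfering" vertices are queried: take min of revealed weights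
        set S0 : Finset V := F.filter (fun u => u = v ∨ L u < w v) with hS0
        have hvS0 : v ∈ S0 := by
          rw [hS0, Finset.mem_filter]; exact ⟨hvF, Or.inl rfl⟩
        obtain ⟨m, hmS0, hmmin⟩ := S0.exists_min_image w ⟨v, hvS0⟩
        have hmF : m ∈ F := (Finset.mem_filter.mp hmS0).1
        have hmR : m ∈ R := by
          rcases (Finset.mem_filter.mp hmS0).2 with h | h
          · rwa [h]
          · by_cases hmv : m = v
            · rwa [hmv]
            · exact hsubA m hmF hmv h
        refine ⟨m, hmF, fun u huF hum => ?_⟩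
        rw [hqhi_mem R m hmR]
        by_cases huS0 : u ∈ S0
        · have huR : u ∈ R := by
            rcases (Finset.mem_filter.mp huS0).2 with h | h
            · rwa [h]
            · by_cases huv : u = v
              · rwa [huv]
              · exact hsubA u huF huv h
          rw [hqlo_mem R u huR]
          exact hmmin u huS0
        · have huv : u ≠ v := by
            intro h; exact huS0 (h ▸ hvS0)
          have hLu : w v ≤ L u := by
            by_contra h
            push_neg at h
            exact huS0 (Finset.mem_filter.mpr ⟨huF, Or.inr h⟩)
          have : w m ≤ w v := hmmin v hvS0
          exact le_trans (le_trans this hLu) (hle_qlo R u)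
      · -- some interfering vertex u0 is unqueried; then the true minimum is mandatory
        push_neg at hsubA
        obtain ⟨u0, hu0F, hu0v, hu0L, hu0R⟩ := hsubA
        have hu0M : u0 ∉ M := fun h => hu0R (hMR h)
        rw [hMmem] at hu0M
        push_neg at hu0M
        obtain ⟨Q', hQ'feas, hu0Q'⟩ := hu0M
        obtain ⟨ms, hmsF, hmsu0, hmsle, hmsmin⟩ :=
          extract Q' hQ'feas u0 hu0F hu0v hu0Q'
        have hmsv : ms ≠ v := by
          intro h
          rw [h] at hmsle
          exact absurd hu0L (not_lt.mpr hmsle)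
        have hmsM : ms ∈ M := by
          rw [hMmem]
          intro Q'' hQ''
          by_contra hmsQ''
          obtain ⟨m'', hm''F, hm''⟩ := hQ'' F hF
          by_cases hmm : m'' = ms
          · subst hmm
            have h1 := hm'' v hvF (Ne.symm hmsv)
            rw [hqhi_not Q'' m'' hmsQ''] at h1
            have h2 : U m'' ≤ w v := le_trans h1 (hqlo_le Q'' v)
            have h3 : U m'' ≤ U v := le_trans h2 (hwU v).le
            exact hvNC m'' hm''F hmsv
              (Set.Ioo_subset_Ioo (hvL m'' hm''F hmsv).le h3)
          · have h1 := hm'' ms hmsF (Ne.symm hmm)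
            rw [hqlo_not Q'' ms hmsQ''] at h1
            have h2 : w m'' ≤ L ms := le_trans (hw_le_qhi Q'' m'') h1
            have h3 : w ms ≤ w m'' := hmsmin m'' hm''F hmm
            exact absurd (lt_of_le_of_lt (h3.trans h2) (hlw ms)) (lt_irrefl _)
        refine ⟨ms, hmsF, fun u huF hums => ?_⟩
        rw [hqhi_mem R ms (hMR hmsM)]
        by_cases huR : u ∈ R
        · rw [hqlo_mem R u huR]
          exact hmsmin u huF hums
        · rw [hqlo_not R u huR]
          have huv : u ≠ v := by intro h; exact huR (h ▸ hvR)
          by_cases huL : L u < w v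
          · -- u is interfering but unqueried: u is not mandatory, extract again
            have huM : u ∉ M := fun h => huR (hMR h)
            rw [hMmem] at huM
            push_neg at huM
            obtain ⟨Q2, hQ2feas, huQ2⟩ := huM
            obtain ⟨my, hmyF, hmyu, hmyle, hmymin⟩ :=
              extract Q2 hQ2feas u huF huv huQ2
            by_cases hmy : my = ms
            · rwa [hmy] at hmyle
            · exact le_trans (hmsmin my hmyF hmy) hmyle
          · push_neg at huL
            exact le_trans hmsle (le_trans (le_trans hu0L.le huL) le_rfl)
    · -- leftmost vertex is unqueried
      have hvQ : v ∉ Q := fun h => hvR (Finset.mem_union_left M h)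
      have hvM : v ∉ M := fun h => hvR (hMR h)
      -- no vertex's weight lies below U v, else v would be mandatory
      have hT : ∀ u ∈ F, u ≠ v → U v ≤ w u := by
        intro u huF huv
        by_contra h
        push_neg at h
        apply hvM
        rw [hMmem]
        intro Q' hQ'
        by_contra hvQ'
        obtain ⟨m', hm'F, hm'⟩ := hQ' F hF
        by_cases hm'v : m' = v
        · subst hm'v
          have h1 := hm' u huF huv
          rw [hqhi_not Q' m' hvQ'] at h1
          exact absurd (lt_of_le_of_lt (h1.trans (hqlo_le Q' u)) h) (lt_irrefl _)
        · have h1 := hm' v hvF (Ne.symm hm'v)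
          rw [hqlo_not Q' v hvQ'] at h1
          have h2 : w m' ≤ L v := le_trans (hw_le_qhi Q' m') h1
          exact absurd (lt_trans (hvL m' hm'F hm'v) (hlw m'))
            (not_lt.mpr h2)
      refine ⟨v, hvF, fun u huF huv => ?_⟩
      have h1 : qhi U w R v = U v := hqhi_not R v hvR
      rw [h1]
      by_cases huR : u ∈ R
      · rw [hqlo_mem R u huR]
        exact hT u huF huv
      · rw [hqlo_not R u huR]
        have huQ : u ∉ Q := fun h => huR (Finset.mem_union_left M h)
        by_contra h
        push_neg at h
        -- L u < U v : the pair {v, u} is an edge of the VC instance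
        have hint : (Set.Ioo (L v) (U v) ∩ Set.Ioo (L u) (U u)).Nonempty := by
          refine ⟨(L u + min (U v) (w u)) / 2, ?_, ?_⟩
          · constructor
            · have : L v < L u := hvL u huF huv
              have hc : L u < min (U v) (w u) := lt_min h (hlw u)
              linarith
            · have hc : L u < min (U v) (w u) := lt_min h (hlw u)
              have : min (U v) (w u) ≤ U v := min_le_left _ _
              linarith
          · constructor
            · have hc : L u < min (U v) (w u) := lt_min h (hlw u)
              linarith
            · have hc : L u < min (U v) (w u) := lt_min h (hlw u)
              have h2 : min (U v) (w u) ≤ w u := min_le_right _ _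
              have h3 : w u < U u := hwU u
              linarith
        have hL : ∀ x ∈ F, L v ≤ L x := by
          intro x hxF
          by_cases hxv : x = v
          · rw [hxv]
          · exact (hvL x hxF hxv).le
        rcases hVC v u ⟨F, hF, hsolved, hvF, huF, Ne.symm huv, hL, hint⟩ with h' | h'
        · exact hvQ h'
        · exact huQ h'
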